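/- Let λ > 0 and 1 ≤ k < l ≤ n with N(k,l) ≤ λ, and let x ∈ K'. Then c_{k,l}(x,y) ≤ λ for all y ∈ L' if and only if c_{k,l}(x,x') ≤ λ. -/
import Mathlib


noncomputable section

variable {X : Type*} [MetricSpace X]

/-- Path distance between vertices `i` and `j` of the path `p₁, …, pₙ`:
the sum of the edge weights `d(p_t, p_{t+1})` for `min i j ≤ t < max i j`. -/
def pathDist (p : ℕ → X) (i j : ℕ) : ℝ :=
  ∑ t ∈ Finset.Ico (min i j) (max i j), dist (p t) (p (t + 1))

/-- Shortest-path distance between vertices `x` and `y` in the unicyclic graph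
`P̄[k,l]` obtained by adding the shortcut `(p_k, p_l)` of weight `d(p_k, p_l)`. -/
def pbar (p : ℕ → X) (k l x y : ℕ) : ℝ :=
  min (pathDist p x y)
    (min (pathDist p x k + dist (p k) (p l) + pathDist p l y)
         (pathDist p x l + dist (p k) (p l) + pathDist p k y))

/-- The length `|C[k,l]|` of the cycle `C[k,l]`. -/
def cycleLen (p : ℕ → X) (k l : ℕ) : ℝ :=
  pathDist p k l + dist (p k) (p l)

/-- The cycle distance `c_{k,l}(x,y)` for `k ≤ x, y ≤ l`. -/
def cycDist (p : ℕ → X) (k l x y : ℕ) : ℝ :=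
  min (pathDist p x y) (cycleLen p k l - pathDist p x y)

/-- `S(k,l) = max_{k ≤ x ≤ l} p̄_{k,l}(1,x)`. -/
def Sfun (p : ℕ → X) (k l : ℕ) : ℝ :=
  sSup ((fun x => pbar p k l 1 x) '' Set.Icc k l)

/-- `E(k,l) = max_{k ≤ x ≤ l} p̄_{k,l}(x,n)`. -/
def Efun (p : ℕ → X) (n k l : ℕ) : ℝ :=
  sSup ((fun x => pbar p k l x n) '' Set.Icc k l)

/-- `U(k,l) = p̄_{k,l}(1,n)`. -/
def Ufun (p : ℕ → X) (n k l : ℕ) : ℝ :=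
  pbar p k l 1 n

/-- `O(k,l) = max_{k ≤ x < y ≤ l} c_{k,l}(x,y)`. -/
def Ofun (p : ℕ → X) (k l : ℕ) : ℝ :=
  sSup {r | ∃ x y : ℕ, k ≤ x ∧ x < y ∧ y ≤ l ∧ r = cycDist p k l x y}

/-- `N(k,l) = max (S(k,l), E(k,l), U(k,l))`. -/
def Nfun (p : ℕ → X) (n k l : ℕ) : ℝ :=
  max (Sfun p k l) (max (Efun p n k l) (Ufun p n k l))

/-- `M(k,l) = max_{1 ≤ x < y ≤ n} p̄_{k,l}(x,y)`, the diameter of `P̄[k,l]`. -/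
def Mfun (p : ℕ → X) (n k l : ℕ) : ℝ :=
  sSup {r | ∃ x y : ℕ, 1 ≤ x ∧ x < y ∧ y ≤ n ∧ r = pbar p k l x y}

lemma pathDist_nonneg (p : ℕ → X) (i j : ℕ) : 0 ≤ pathDist p i j :=
  Finset.sum_nonneg fun _ _ => dist_nonneg

lemma pathDist_comm (p : ℕ → X) (i j : ℕ) : pathDist p i j = pathDist p j i := by
  unfold pathDist; rw [min_comm, max_comm]

lemma pathDist_self (p : ℕ → X) (i : ℕ) : pathDist p i i = 0 := by
  simp [pathDist]

lemma pathDist_add (p : ℕ → X) {i j m : ℕ} (h1 : i ≤ j) (h2 : j ≤ m) :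
    pathDist p i m = pathDist p i j + pathDist p j m := by
  unfold pathDist
  rw [min_eq_left (h1.trans h2), max_eq_right (h1.trans h2), min_eq_left h1,
    max_eq_right h1, min_eq_left h2, max_eq_right h2,
    ← Finset.sum_Ico_consecutive _ h1 h2]

lemma pathDist_mono (p : ℕ → X) {i j m : ℕ} (h1 : i ≤ j) (h2 : j ≤ m) :
    pathDist p i j ≤ pathDist p i m := by
  rw [pathDist_add p h1 h2]
  linarith [pathDist_nonneg p j m]

/-- Let `λ > 0` and `1 ≤ k < l ≤ n` with `N(k,l) ≤ λ`, and let
`x ∈ K' = K \ L`. Then `c_{k,l}(x,y) ≤ λ` for all `y ∈ L' = L \ K` if and only if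
`c_{k,l}(x,x') ≤ λ`, where `x'` is the smallest index with `x < x' ≤ l` and
`δ_P(x,x') > λ`. -/
theorem checkO_via_xprime {X : Type*} [MetricSpace X]
    (n : ℕ) (hn : 2 ≤ n) (p : ℕ → X)
    (k l : ℕ) (hk : 1 ≤ k) (hkl : k < l) (hl : l ≤ n)
    (lam : ℝ) (hlam : 0 < lam) (hN : Nfun p n k l ≤ lam)
    (x : ℕ)
    (hx : x ∈ {z : ℕ | k ≤ z ∧ z ≤ l ∧ pathDist p k z ≤ lam} \
              {z : ℕ | k ≤ z ∧ z ≤ l ∧ pathDist p z l ≤ lam}) :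
    (∀ y ∈ {z : ℕ | k ≤ z ∧ z ≤ l ∧ pathDist p z l ≤ lam} \
           {z : ℕ | k ≤ z ∧ z ≤ l ∧ pathDist p k z ≤ lam},
        cycDist p k l x y ≤ lam) ↔
      cycDist p k l x (sInf {v : ℕ | x < v ∧ v ≤ l ∧ lam < pathDist p x v}) ≤ lam := by
  obtain ⟨⟨hkx, hxl, hkxd⟩, hxK⟩ := hx
  have hxld : lam < pathDist p x l := by
    by_contra h
    exact hxK ⟨hkx, hxl, le_of_not_gt h⟩
  have hxltl : x < l := by
    rcases lt_or_eq_of_le hxl with h | h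
    · exact h
    · subst h; rw [pathDist_self] at hxld; linarith
  set T : Set ℕ := {v : ℕ | x < v ∧ v ≤ l ∧ lam < pathDist p x v} with hT
  have hTne : T.Nonempty := ⟨l, hxltl, le_refl l, hxld⟩
  set x' := sInf T with hx'
  have hx'mem : x' ∈ T := Nat.sInf_mem hTne
  obtain ⟨hxx', hx'l, hlamxx'⟩ := hx'mem
  have hkx' : k ≤ x' := hkx.trans hxx'.le
  -- path distance facts
  have hkxx' : pathDist p k x' = pathDist p k x + pathDist p x x' :=
    pathDist_add p hkx hxx'.le
  have hkx'big : lam < pathDist p k x' := by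
    rw [hkxx']; linarith [pathDist_nonneg p k x]
  -- From E(k,l) ≤ lam, get pbar p k l x' n ≤ lam, hence pathDist p x' l ≤ lam
  have hE : Efun p n k l ≤ lam :=
    le_trans (le_trans (le_max_left _ _) (le_max_right (Sfun p k l) _)) hN
  have hpbarx' : pbar p k l x' n ≤ lam := by
    refine le_trans ?_ hE
    exact le_csSup ((Set.finite_Icc k l).image _).bddAbove
      ⟨x', ⟨hkx', hx'l⟩, rfl⟩
  have hx'lle : pathDist p x' l ≤ lam := by
    unfold pbar at hpbarx'
    have h1 : pathDist p x' l ≤ pathDist p x' n := pathDist_mono p hx'l hl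
    have h2 : pathDist p k x' ≤ pathDist p x' k + dist (p k) (p l) + pathDist p l n := by
      rw [pathDist_comm p x' k]
      linarith [dist_nonneg (x := p k) (y := p l), pathDist_nonneg p l n]
    have h3 : (0:ℝ) ≤ dist (p k) (p l) + pathDist p k n := by
      linarith [dist_nonneg (x := p k) (y := p l), pathDist_nonneg p k n]
    rcases le_or_gt (pathDist p x' n)
        (min (pathDist p x' k + dist (p k) (p l) + pathDist p l n)
          (pathDist p x' l + dist (p k) (p l) + pathDist p k n)) with h | h
    · rw [min_eq_left h] at hpbarx'; linarith
    · rw [min_eq_right h.le] at hpbarx'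
      rcases min_le_iff.mp hpbarx' with h' | h'
      · linarith
      · linarith
  -- hence x' ∈ L'
  have hx'L' : x' ∈ {z : ℕ | k ≤ z ∧ z ≤ l ∧ pathDist p z l ≤ lam} \
      {z : ℕ | k ≤ z ∧ z ≤ l ∧ pathDist p k z ≤ lam} := by
    refine ⟨⟨hkx', hx'l, hx'lle⟩, ?_⟩
    intro ⟨_, _, h⟩
    linarith
  constructor
  · intro hall
    exact hall x' hx'L'
  · intro hcyc y hy
    obtain ⟨⟨hky, hyl, hyld⟩, hyK⟩ := hy
    have hkyd : lam < pathDist p k y := by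
      by_contra h
      exact hyK ⟨hky, hyl, le_of_not_gt h⟩
    have hxy : x < y := by
      by_contra h
      push_neg at h
      have := pathDist_mono p hky (le_of_not_gt fun hc => absurd h (not_le.mpr hc))
      -- need pathDist p k y ≤ pathDist p k x
      have : pathDist p k y ≤ pathDist p k x := pathDist_mono p hky h
      linarith
    rcases lt_or_ge y x' with hyx' | hx'y
    · -- y < x' : y ∉ T so pathDist p x y ≤ lam
      have hyT : y ∉ T := Nat.notMem_of_lt_sInf hyx'
      have : ¬ lam < pathDist p x y := fun h => hyT ⟨hxy, hyl, h⟩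
      have hle : pathDist p x y ≤ lam := le_of_not_gt this
      exact le_trans (min_le_left _ _) hle
    · -- x' ≤ y
      have hx'big : lam < pathDist p x x' := hlamxx'
      have hC : cycleLen p k l - pathDist p x x' ≤ lam := by
        unfold cycDist at hcyc
        rcases min_le_iff.mp hcyc with h | h
        · linarith
        · exact h
      have hmono : pathDist p x x' ≤ pathDist p x y :=
        pathDist_mono p hxx'.le hx'y
      calc cycDist p k l x y ≤ cycleLen p k l - pathDist p x y := min_le_right _ _
        _ ≤ cycleLen p k l - pathDist p x x' := by linarith
        _ ≤ lam := hC
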